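/- Let $A$ be a complex unital Banach algebra, let $h : \mathbb{R} \times \mathbb{R} \to A$, $(k,X) \mapsto h(k,X)$, be twice continuously differentiable, and assume $\partial_k^2 h = 1_A$ and $\partial_k \partial_X h = 0$ identically (as holds for the Bloch symbol $h(k,X) = \tfrac12(-i\nabla + k)^2 + V(\cdot, X)$). Let $z \in \mathbb{C}$ be such that $z\cdot 1_A - h(k,X)$ is invertible in $A$ for every $(k,X)$ and write $r(k,X) := (z\cdot 1_A - h(k,X))^{-1}$. For twice differentiable maps $F, G : \mathbb{R}^2 \to A$ define the second-order Poisson bracket $\{F,G\}_2 := (\partial_k^2 F)(\partial_X^2 G) + (\partial_X^2 F)(\partial_k^2 G) - 2(\partial_k\partial_X F)(\partial_k\partial_X G)$, products in $A$ in the indicated order. Then at every point $(k,X)$, $\{(z-h),\, r\}_2 = -2\, r\,(\partial_X h)\, r\,(\partial_X h)\, r \;-\; r\,(\partial_X^2 h)\, r \;-\; 2\,(\partial_X^2 h)\, r\,(\partial_k h)\, r\,(\partial_k h)\, r \;-\; (\partial_X^2 h)\, r^2$. -/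

import Mathlib

noncomputable section

variable {A : Type*} [NormedRing A] [NormedAlgebra ℂ A] [CompleteSpace A]

/-- Partial derivative with respect to the first variable `k`. -/
def pk (F : ℝ × ℝ → A) (p : ℝ × ℝ) : A := fderiv ℝ F p (1, 0)

/-- Partial derivative with respect to the second variable `X`. -/
def pX (F : ℝ × ℝ → A) (p : ℝ × ℝ) : A := fderiv ℝ F p (0, 1)

/-- The second-order Poisson bracket
`{F, G}₂ = (∂_k² F)(∂_X² G) + (∂_X² F)(∂_k² G) - 2 (∂_k ∂_X F)(∂_k ∂_X G)`
of two Banach-algebra-valued symbols, products taken in the indicated order. -/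
def pbracket2 (F G : ℝ × ℝ → A) (p : ℝ × ℝ) : A :=
  pk (pk F) p * pX (pX G) p + pX (pX F) p * pk (pk G) p
    - 2 * (pk (pX F) p * pk (pX G) p)

/-- Reformulation of the term `III` in the second-order semiclassical coefficient:
for a symbol with `∂_k² h = 1` and `∂_k ∂_X h = 0` (as for the Bloch symbol),
`{(z-h), r}₂ = -2 r (∂_X h) r (∂_X h) r - r (∂_X² h) r - 2 (∂_X² h) r (∂_k h) r (∂_k h) r - (∂_X² h) r²`
where `r = (z-h)⁻¹`. -/
theorem stmt_15 (h : ℝ × ℝ → A) (hh : ContDiff ℝ 2 h)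
    (hkk : ∀ p : ℝ × ℝ, pk (pk h) p = 1)
    (hkX : ∀ p : ℝ × ℝ, pk (pX h) p = 0)
    (z : ℂ)
    (hz : ∀ p : ℝ × ℝ, IsUnit (algebraMap ℂ A z - h p))
    (r : ℝ × ℝ → A)
    (hr : ∀ p : ℝ × ℝ, r p = Ring.inverse (algebraMap ℂ A z - h p))
    (p : ℝ × ℝ) :
    pbracket2 (fun q => algebraMap ℂ A z - h q) r p =
      -2 * (r p * pX h p * r p * pX h p * r p) - r p * pX (pX h) p * r p
        - 2 * (pX (pX h) p * r p * pk h p * r p * pk h p * r p)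
        - pX (pX h) p * r p ^ 2 := by
  have hdiff : Differentiable ℝ h := hh.differentiable (by norm_num)
  have hf' : ContDiff ℝ 1 (fderiv ℝ h) := hh.fderiv_right (by norm_num)
  -- derivative of directional derivatives of h
  have hDh : ∀ (v : ℝ × ℝ) (q : ℝ × ℝ), HasFDerivAt (fun q' => fderiv ℝ h q' v)
      ((fderiv ℝ (fderiv ℝ h) q).flip v) q := by
    intro v q
    have := ((hf'.differentiable (by norm_num) q).hasFDerivAt).clm_apply (hasFDerivAt_const v q)
    simpa using this
  -- derivative of the resolvent
  have hr' : ∀ q, HasFDerivAt r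
      ((ContinuousLinearMap.mulLeftRight ℝ A (r q) (r q)).comp (fderiv ℝ h q)) q := by
    intro q
    obtain ⟨u, hu⟩ := hz q
    have hru : Ring.inverse (algebraMap ℂ A z - h q) = (↑u⁻¹ : A) := by
      rw [← hu, Ring.inverse_unit]
    have hg : HasFDerivAt (fun q' => algebraMap ℂ A z - h q') (-(fderiv ℝ h q)) q := by
      exact (hdiff q).hasFDerivAt.const_sub (algebraMap ℂ A z)
    have hinv : HasFDerivAt Ring.inverse
        (-ContinuousLinearMap.mulLeftRight ℝ A (↑u⁻¹ : A) (↑u⁻¹ : A))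
        (algebraMap ℂ A z - h q) := hu ▸ hasFDerivAt_ringInverse (𝕜 := ℝ) u
    have hcomp := hinv.comp q hg
    have heq : r = fun q' => Ring.inverse (algebraMap ℂ A z - h q') := funext hr
    rw [heq]
    refine HasFDerivAt.congr_fderiv hcomp ?_
    refine ContinuousLinearMap.ext fun v => ?_
    simp [ContinuousLinearMap.mulLeftRight_apply, hru]
  -- first derivatives of r
  have pkr : ∀ q, pk r q = r q * fderiv ℝ h q (1,0) * r q := by
    intro q
    rw [pk, (hr' q).fderiv]
    simp [ContinuousLinearMap.mulLeftRight_apply]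
  have pXr : ∀ q, pX r q = r q * fderiv ℝ h q (0,1) * r q := by
    intro q
    rw [pX, (hr' q).fderiv]
    simp [ContinuousLinearMap.mulLeftRight_apply]
  -- key second-derivative formula
  have key : ∀ (v w : ℝ × ℝ), fderiv ℝ (fun q' => r q' * fderiv ℝ h q' v * r q') p w
      = r p * fderiv ℝ h p w * r p * fderiv ℝ h p v * r p
        + r p * fderiv ℝ (fderiv ℝ h) p w v * r p
        + r p * fderiv ℝ h p v * (r p * fderiv ℝ h p w * r p) := by
    intro v w
    have H2 := ((hr' p).mul' (hDh v p)).mul' (hr' p)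
    rw [show (fun q' => r q' * fderiv ℝ h q' v * r q') = (r * fun q' => fderiv ℝ h q' v) * r from rfl, H2.fderiv]
    simp only [ContinuousLinearMap.add_apply, ContinuousLinearMap.smul_apply,
      ContinuousLinearMap.smulRight_apply, ContinuousLinearMap.comp_apply,
      ContinuousLinearMap.coe_comp', Function.comp_apply, ContinuousLinearMap.flip_apply,
      ContinuousLinearMap.mulLeftRight_apply, smul_eq_mul, Pi.mul_apply, op_smul_eq_mul]
    noncomm_ring
  -- second partials of h in terms of the second fderiv
  have hsnd : ∀ v w : ℝ × ℝ, pk (fun q => fderiv ℝ h q v) p = fderiv ℝ (fderiv ℝ h) p (1,0) v ∧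
      pX (fun q => fderiv ℝ h q v) p = fderiv ℝ (fderiv ℝ h) p (0,1) v := by
    intro v w
    constructor
    · rw [pk, (hDh v p).fderiv]; rfl
    · rw [pX, (hDh v p).fderiv]; rfl
  have hkk' : fderiv ℝ (fderiv ℝ h) p (1,0) (1,0) = 1 := by
    rw [← (hsnd (1,0) 0).1]; exact hkk p
  have hkX' : fderiv ℝ (fderiv ℝ h) p (1,0) (0,1) = 0 := by
    rw [← (hsnd (0,1) 0).1]; exact hkX p
  have hXX' : pX (pX h) p = fderiv ℝ (fderiv ℝ h) p (0,1) (0,1) := (hsnd (0,1) 0).2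
  -- second partials of r
  have hpXXr : pX (pX r) p = 2 * (r p * fderiv ℝ h p (0,1) * r p * fderiv ℝ h p (0,1) * r p)
      + r p * fderiv ℝ (fderiv ℝ h) p (0,1) (0,1) * r p := by
    rw [pX, funext pXr, key (0,1) (0,1)]
    noncomm_ring
  have hpkkr : pk (pk r) p = 2 * (r p * fderiv ℝ h p (1,0) * r p * fderiv ℝ h p (1,0) * r p)
      + r p * r p := by
    rw [pk, funext pkr, key (1,0) (1,0), hkk']
    noncomm_ring
  -- the (z - h) side
  have hFk : (fun q => pk (fun q' => algebraMap ℂ A z - h q') q) = fun q => -(fderiv ℝ h q (1,0)) := by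
    funext q; rw [pk, fderiv_const_sub]; rfl
  have hFX : (fun q => pX (fun q' => algebraMap ℂ A z - h q') q) = fun q => -(fderiv ℝ h q (0,1)) := by
    funext q; rw [pX, fderiv_const_sub]; rfl
  have hFkk : pk (pk (fun q => algebraMap ℂ A z - h q)) p = -1 := by
    rw [pk]
    rw [show (pk (fun q => algebraMap ℂ A z - h q)) = fun q => -(fderiv ℝ h q (1,0)) from hFk]
    rw [fderiv_fun_neg]
    simp only [ContinuousLinearMap.neg_apply]
    rw [(hDh (1,0) p).fderiv]
    simp [ContinuousLinearMap.flip_apply, hkk']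
  have hFXX : pX (pX (fun q => algebraMap ℂ A z - h q)) p = -(pX (pX h) p) := by
    rw [pX]
    rw [show (pX (fun q => algebraMap ℂ A z - h q)) = fun q => -(fderiv ℝ h q (0,1)) from hFX]
    rw [fderiv_fun_neg]
    simp only [ContinuousLinearMap.neg_apply]
    rw [(hDh (0,1) p).fderiv, hXX']
    rfl
  have hFkX : pk (pX (fun q => algebraMap ℂ A z - h q)) p = 0 := by
    rw [pk]
    rw [show (pX (fun q => algebraMap ℂ A z - h q)) = fun q => -(fderiv ℝ h q (0,1)) from hFX]
    rw [fderiv_fun_neg]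
    simp only [ContinuousLinearMap.neg_apply]
    rw [(hDh (0,1) p).fderiv]
    simp [ContinuousLinearMap.flip_apply, hkX']
  -- put everything together
  rw [pbracket2, hFkk, hFXX, hFkX, hpXXr, hpkkr, hXX']
  have hk : pk h p = fderiv ℝ h p (1,0) := rfl
  have hX : pX h p = fderiv ℝ h p (0,1) := rfl
  rw [hk, hX, sq]
  noncomm_ring

end
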